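/- Let K be a field, let n ≥ 1, d ≥ 1, and fix a d^{n}-cage over K. Then for every node p_I, the gradient vectors ∇𝓛_1(p_I),…,∇𝓛_n(p_I) ∈ K^{n+1} of the products 𝓛_j = ∏_{i=1}^d L_{j,i} are linearly independent; indeed ∇𝓛_j(p_I) = c_j·∇L_{j,I_j}(p_I) where c_j = ∏_{i ≠ I_j} L_{j,i}(p_I) ≠ 0. -/

import Mathlib

open MvPolynomial

lemma finsupp_degree_one {σ : Type*} (m : σ →₀ ℕ) (h : m.degree = 1) :
    ∃ l, m = Finsupp.single l 1 := by
  classical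
  have hne : m.support.Nonempty := by
    rcases Finset.eq_empty_or_nonempty m.support with h0 | h0
    · exfalso
      have : m = 0 := Finsupp.support_eq_empty.mp h0
      simp [this, Finsupp.degree] at h
    · exact h0
  obtain ⟨l, hl⟩ := hne
  refine ⟨l, ?_⟩
  have hml : 1 ≤ m l := Nat.one_le_iff_ne_zero.mpr (Finsupp.mem_support_iff.mp hl)
  have hle : m l ≤ m.degree := Finset.single_le_sum (fun _ _ => Nat.zero_le _) hl
  have hml1 : m l = 1 := le_antisymm (hle.trans h.le) hml
  ext a
  by_cases ha : a = l
  · simp [ha, hml1]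
  · simp only [Finsupp.single_apply, if_neg (Ne.symm ha)]
    by_contra hma
    have hma' : 1 ≤ m a := Nat.one_le_iff_ne_zero.mpr hma
    have hamem : a ∈ m.support := Finsupp.mem_support_iff.mpr hma
    have : 2 ≤ m.degree := by
      have := Finset.add_sum_erase _ m hl
      have h2 : m a ≤ ∑ x ∈ m.support.erase l, m x :=
        Finset.single_le_sum (fun _ _ => Nat.zero_le _)
          (Finset.mem_erase.mpr ⟨ha, hamem⟩)
      show 2 ≤ ∑ x ∈ m.support, m x
      rw [← this]
      omega
    omega

lemma eval_pderiv_homog {K : Type*} [CommRing K] {N : ℕ}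
    (P : MvPolynomial (Fin N) K) (h : P.IsHomogeneous 1)
    (v : Fin N → K) (l : Fin N) :
    eval v (pderiv l P) = coeff (Finsupp.single l 1) P := by
  classical
  conv_lhs => rw [P.as_sum]
  rw [map_sum, map_sum]
  have key : ∀ m ∈ P.support,
      eval v (pderiv l (monomial m (coeff m P)))
        = if Finsupp.single l 1 = m then coeff m P else 0 := by
    intro m hm
    obtain ⟨l', hl'⟩ := finsupp_degree_one m (by rw [Finsupp.degree_eq_weight_one]; exact h (MvPolynomial.mem_support_iff.mp hm))
    subst hl'
    by_cases hll : l' = l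
    · subst hll
      simp [pderiv_monomial]
    · rw [if_neg]
      · simp [pderiv_monomial, Finsupp.single_apply, hll]
      · intro hc
        exact hll (by simpa using (Finsupp.single_left_injective one_ne_zero hc.symm))
  rw [Finset.sum_congr rfl key, Finset.sum_ite_eq]
  split
  · rfl
  · exact (MvPolynomial.notMem_support_iff.mp (by assumption)).symm

theorem gradients_of_cage_products_at_node
    {K : Type*} [Field K] (n d : ℕ) (hn : 1 ≤ n) (hd : 1 ≤ d)
    (L : Fin n → Fin d → MvPolynomial (Fin (n + 1)) K)
    (hL : ∀ j i, (L j i).IsHomogeneous 1)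
    (p : (Fin n → Fin d) → Fin (n + 1) → K)
    (hp0 : ∀ I, p I ≠ 0)
    (hind : ∀ I : Fin n → Fin d, LinearIndependent K fun j => L j (I j))
    (hline : ∀ (I : Fin n → Fin d) (v : Fin (n + 1) → K),
      (∀ j, MvPolynomial.eval v (L j (I j)) = 0) ↔ ∃ c : K, v = c • p I)
    (hne : ∀ (j : Fin n) (i : Fin d) (I : Fin n → Fin d),
      i ≠ I j → MvPolynomial.eval (p I) (L j i) ≠ 0)
    (I : Fin n → Fin d) :
    (∀ j : Fin n,
      (∏ i ∈ Finset.univ.erase (I j), MvPolynomial.eval (p I) (L j i)) ≠ 0 ∧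
      (fun l : Fin (n + 1) =>
          MvPolynomial.eval (p I) (MvPolynomial.pderiv l (∏ i, L j i)))
        = (∏ i ∈ Finset.univ.erase (I j), MvPolynomial.eval (p I) (L j i)) •
          fun l : Fin (n + 1) =>
            MvPolynomial.eval (p I) (MvPolynomial.pderiv l (L j (I j)))) ∧
    LinearIndependent K
      (fun j : Fin n => fun l : Fin (n + 1) =>
        MvPolynomial.eval (p I) (MvPolynomial.pderiv l (∏ i, L j i))) := by
  classical
  -- the node lies on each of its forms
  have hzero : ∀ j : Fin n, MvPolynomial.eval (p I) (L j (I j)) = 0 := by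
    exact (hline I (p I)).mpr ⟨1, by simp⟩
  -- nonvanishing of the products of the remaining factors
  have hc : ∀ j : Fin n,
      (∏ i ∈ Finset.univ.erase (I j), MvPolynomial.eval (p I) (L j i)) ≠ 0 := by
    intro j
    refine Finset.prod_ne_zero_iff.mpr fun i hi => ?_
    exact hne j i I (Finset.ne_of_mem_erase hi)
  -- gradient formula
  have hgrad : ∀ (j : Fin n) (l : Fin (n + 1)),
      MvPolynomial.eval (p I) (MvPolynomial.pderiv l (∏ i, L j i))
        = (∏ i ∈ Finset.univ.erase (I j), MvPolynomial.eval (p I) (L j i)) *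
          MvPolynomial.eval (p I) (MvPolynomial.pderiv l (L j (I j))) := by
    intro j l
    rw [← Finset.mul_prod_erase Finset.univ (L j) (Finset.mem_univ (I j)),
      MvPolynomial.pderiv_mul]
    simp [hzero j, map_prod, mul_comm]
  refine ⟨fun j => ⟨hc j, ?_⟩, ?_⟩
  · funext l
    simp [hgrad j l, smul_eq_mul]
  · -- linear independence
    rw [Fintype.linearIndependent_iff]
    intro a ha j
    -- reduce to coefficients of the linear combination Q
    set Q : MvPolynomial (Fin (n + 1)) K :=
      ∑ k, (a k * ∏ i ∈ Finset.univ.erase (I k), MvPolynomial.eval (p I) (L k i))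
        • L k (I k) with hQdef
    have hQhom : Q.IsHomogeneous 1 := by
      apply MvPolynomial.IsHomogeneous.sum
      intro k _
      rw [MvPolynomial.smul_eq_C_mul]
      exact (MvPolynomial.isHomogeneous_C _ _).mul (hL k (I k))
    have hQcoeff : ∀ l : Fin (n + 1), MvPolynomial.coeff (Finsupp.single l 1) Q = 0 := by
      intro l
      have := congrFun ha l
      simp only [Finset.sum_apply, Pi.smul_apply, smul_eq_mul, Pi.zero_apply] at this
      rw [hQdef, MvPolynomial.coeff_sum]
      have : (∑ k, a k * MvPolynomial.eval (p I) (MvPolynomial.pderiv l (∏ i, L k i))) = 0 :=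
        this
      calc (∑ k, MvPolynomial.coeff (Finsupp.single l 1)
              ((a k * ∏ i ∈ Finset.univ.erase (I k), MvPolynomial.eval (p I) (L k i))
                • L k (I k)))
          = ∑ k, a k * MvPolynomial.eval (p I) (MvPolynomial.pderiv l (∏ i, L k i)) := by
            refine Finset.sum_congr rfl fun k _ => ?_
            rw [MvPolynomial.coeff_smul, smul_eq_mul,
              ← eval_pderiv_homog (L k (I k)) (hL k (I k)) (p I) l, hgrad k l]
            ring
        _ = 0 := this
    have hQ0 : Q = 0 := by
      ext m
      by_cases hm : m.degree = 1
      · obtain ⟨l, rfl⟩ := finsupp_degree_one m hm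
        simpa using hQcoeff l
      · simpa using hQhom.coeff_eq_zero hm
    have := Fintype.linearIndependent_iff.mp (hind I)
      (fun k => a k * ∏ i ∈ Finset.univ.erase (I k), MvPolynomial.eval (p I) (L k i))
      (by exact hQ0) j
    exact (mul_eq_zero.mp this).resolve_right (hc j)
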